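/- Let p ≥ 1 be a natural number and c a real constant. Suppose U : ℝ → ℝ is three-times continuously differentiable, satisfies the travelling wave ODE 0 = d/dz[ (1/2) p U^{p−1} (U^2 − U'^2) + (U^p − c)(U − U'') ] for all z, and satisfies the asymptotic decay conditions U(z) → 0, U'(z) → 0, U''(z) → 0 as z → +∞ and as z → −∞. Then U is identically zero. That is, there exist no smooth, asymptotically decaying, nontrivial travelling wave solutions of the gCH equation. -/

import Mathlib

open Real Filter

theorem no_smooth_decaying_travelling_waves (p : ℕ) (hp : 1 ≤ p) (c : ℝ)
    (U : ℝ → ℝ) (hU : ContDiff ℝ 3 U)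
    (hODE : ∀ z : ℝ,
      0 = deriv (fun w =>
        (1/2) * (p : ℝ) * U w ^ (p-1) * ((U w)^2 - (deriv U w)^2)
        + (U w ^ p - c) * (U w - deriv (deriv U) w)) z)
    (hU0top : Tendsto U atTop (nhds 0))
    (hU1top : Tendsto (deriv U) atTop (nhds 0))
    (hU2top : Tendsto (deriv (deriv U)) atTop (nhds 0))
    (hU0bot : Tendsto U atBot (nhds 0))
    (hU1bot : Tendsto (deriv U) atBot (nhds 0))
    (hU2bot : Tendsto (deriv (deriv U)) atBot (nhds 0)) :
    ∀ z : ℝ, U z = 0 := by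
  set U1 : ℝ → ℝ := deriv U with hU1def
  set U2 : ℝ → ℝ := deriv U1 with hU2def
  -- regularity
  have hU2' : ContDiff ℝ 2 U1 := by
    have := (contDiff_succ_iff_deriv.mp (show ContDiff ℝ (2+1) U by norm_num; exact hU)).2.2
    exact this
  have hU1' : ContDiff ℝ 1 U2 := by
    have := (contDiff_succ_iff_deriv.mp (show ContDiff ℝ (1+1) U1 by norm_num; exact hU2')).2.2
    exact this
  have hUd : Differentiable ℝ U := hU.differentiable (by norm_num)
  have hU1d : Differentiable ℝ U1 := hU2'.differentiable (by norm_num)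
  have hU2d : Differentiable ℝ U2 := hU1'.differentiable (by norm_num)
  have hUz : ∀ z, HasDerivAt U (U1 z) z := fun z => (hUd z).hasDerivAt
  have hU1z : ∀ z, HasDerivAt U1 (U2 z) z := fun z => (hU1d z).hasDerivAt
  -- the conserved quantity F
  set F : ℝ → ℝ := fun w =>
      (1/2) * (p : ℝ) * U w ^ (p-1) * ((U w)^2 - (U1 w)^2)
      + (U w ^ p - c) * (U w - U2 w) with hFdef
  have hFdiff : Differentiable ℝ F := by
    exact (((hUd.pow (p-1)).const_mul ((1/2) * (p:ℝ))).mul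
      ((hUd.pow 2).sub (hU1d.pow 2))).add
      (((hUd.pow p).sub_const c).mul (hUd.sub hU2d))
  have hFtop : Tendsto F atTop (nhds 0) := by
    have : Tendsto F atTop (nhds ((1/2) * (p:ℝ) * (0:ℝ) ^ (p-1) * ((0:ℝ)^2 - (0:ℝ)^2)
        + ((0:ℝ) ^ p - c) * ((0:ℝ) - 0))) :=
      ((tendsto_const_nhds.mul (hU0top.pow (p-1))).mul
        ((hU0top.pow 2).sub (hU1top.pow 2))).add
        (((hU0top.pow p).sub tendsto_const_nhds).mul (hU0top.sub hU2top))
    simpa using this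
  have hFconst := is_const_of_deriv_eq_zero hFdiff (fun x => (hODE x).symm)
  have hFzero : ∀ z, F z = 0 := by
    intro z
    have h1 : Tendsto F atTop (nhds (F z)) := by
      have : F = fun _ => F z := funext fun y => hFconst y z
      rw [this]; exact tendsto_const_nhds
    exact tendsto_nhds_unique h1 hFtop
  -- the second conserved quantity G
  set G : ℝ → ℝ := fun w => (U w ^ p - c) * ((U w)^2 - (U1 w)^2) with hGdef
  have hGz : ∀ z, HasDerivAt G 0 z := by
    intro z
    have h1 : HasDerivAt (fun w => U w ^ p - c) ((p:ℝ) * U z ^ (p-1) * U1 z) z :=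
      ((hUz z).pow p).sub_const c
    have h2 : HasDerivAt (fun w => (U w)^2 - (U1 w)^2)
        ((2:ℕ) * U z ^ (2-1) * U1 z - (2:ℕ) * U1 z ^ (2-1) * U2 z) z :=
      ((hUz z).pow 2).sub ((hU1z z).pow 2)
    have h3 := h1.mul h2
    refine h3.congr_deriv ?_
    have hF := hFzero z
    simp only [hFdef] at hF
    push_cast
    linear_combination (2 * U1 z) * hF
  have hGdiff : Differentiable ℝ G := fun z => (hGz z).differentiableAt
  have hGtop : Tendsto G atTop (nhds 0) := by
    have : Tendsto G atTop (nhds (((0:ℝ) ^ p - c) * ((0:ℝ)^2 - (0:ℝ)^2))) :=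
      ((hU0top.pow p).sub tendsto_const_nhds).mul ((hU0top.pow 2).sub (hU1top.pow 2))
    simpa using this
  have hGconst := is_const_of_deriv_eq_zero hGdiff (fun x => (hGz x).deriv)
  have hGzero : ∀ z, G z = 0 := by
    intro z
    have h1 : Tendsto G atTop (nhds (G z)) := by
      have : G = fun _ => G z := funext fun y => hGconst y z
      rw [this]; exact tendsto_const_nhds
    exact tendsto_nhds_unique h1 hGtop
  -- pointwise identity p * U^(p-1) * (U^2 - U1^2)^2 = 0
  have hkey : ∀ z, (p:ℝ) * U z ^ (p-1) * ((U z)^2 - (U1 z)^2)^2 = 0 := by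
    intro z
    have hF := hFzero z
    have hG := hGzero z
    simp only [hFdef] at hF
    simp only [hGdef] at hG
    linear_combination (2 * ((U z)^2 - (U1 z)^2)) * hF + (-(2 * (U z - U2 z))) * hG
  -- V = 0 where U ≠ 0
  have hVne : ∀ z, U z ≠ 0 → (U z)^2 - (U1 z)^2 = 0 := by
    intro z hz
    have hp' : (p:ℝ) ≠ 0 := Nat.cast_ne_zero.mpr (by omega)
    have hpow : U z ^ (p-1) ≠ 0 := pow_ne_zero _ hz
    have := hkey z
    have h2 : ((U z)^2 - (U1 z)^2)^2 = 0 := by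
      rcases mul_eq_zero.mp this with h | h
      · rcases mul_eq_zero.mp h with h' | h'
        · exact absurd h' hp'
        · exact absurd h' hpow
      · exact h
    exact pow_eq_zero_iff (by norm_num) |>.mp h2
  -- V = 0 everywhere
  have hV : ∀ z, (U z)^2 = (U1 z)^2 := by
    intro z
    by_cases hz : U z ≠ 0
    · have := hVne z hz
      linarith
    · push_neg at hz
      by_cases h1 : U1 z = 0
      · rw [hz, h1]
      · -- U z = 0, U1 z ≠ 0 : use continuity along punctured neighborhood
        have hslope : Tendsto (slope U z) (nhdsWithin z {z}ᶜ) (nhds (U1 z)) :=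
          hasDerivAt_iff_tendsto_slope.mp (hUz z)
        have hne : ∀ᶠ y in nhdsWithin z {z}ᶜ, slope U z y ≠ 0 := hslope.eventually_ne h1
        have hUne : ∀ᶠ y in nhdsWithin z {z}ᶜ, U y ≠ 0 := by
          filter_upwards [hne] with y hy
          intro hUy
          apply hy
          simp [slope, hz, hUy]
        have hVz : ∀ᶠ y in nhdsWithin z {z}ᶜ, (fun w => (U w)^2 - (U1 w)^2) y = 0 := by
          filter_upwards [hUne] with y hy using hVne y hy
        have hcont : Tendsto (fun w => (U w)^2 - (U1 w)^2) (nhdsWithin z {z}ᶜ)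
            (nhds ((U z)^2 - (U1 z)^2)) :=
          (((hU.continuous.pow 2).sub (hU2'.continuous.pow 2)).continuousAt).continuousWithinAt
        have h0 : Tendsto (fun w => (U w)^2 - (U1 w)^2) (nhdsWithin z {z}ᶜ) (nhds 0) :=
          Tendsto.congr' (by filter_upwards [hVz] with y hy using hy.symm) tendsto_const_nhds
        have := tendsto_nhds_unique hcont h0
        linarith
  -- final argument: maximum of U^2
  intro z₀
  by_contra hz₀
  set f : ℝ → ℝ := fun z => (U z)^2 with hfdef
  have hfz₀ : 0 < f z₀ := by positivity
  have hftop : Tendsto f atTop (nhds 0) := by simpa using hU0top.pow 2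
  have hfbot : Tendsto f atBot (nhds 0) := by simpa using hU0bot.pow 2
  have htop : ∀ᶠ z in atTop, f z < f z₀ := hftop.eventually_lt_const hfz₀
  have hbot : ∀ᶠ z in atBot, f z < f z₀ := hfbot.eventually_lt_const hfz₀
  obtain ⟨B, hB⟩ := eventually_atTop.mp htop
  obtain ⟨A, hA⟩ := eventually_atBot.mp hbot
  set a := min A z₀ with hadef
  set b := max B z₀ with hbdef
  have hz₀mem : z₀ ∈ Set.Icc a b := ⟨min_le_right _ _, le_max_right _ _⟩
  obtain ⟨zs, hzsmem, hzsmax⟩ := (isCompact_Icc (a := a) (b := b)).exists_isMaxOn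
    ⟨z₀, hz₀mem⟩ ((hU.continuous.pow 2).continuousOn)
  have hglobal : ∀ z, f z ≤ f zs := by
    intro z
    by_cases hzmem : z ∈ Set.Icc a b
    · exact hzsmax hzmem
    · have hlt : f z < f z₀ := by
        simp only [Set.mem_Icc, not_and_or, not_le] at hzmem
        rcases hzmem with h | h
        · exact hA z (le_of_lt (lt_of_lt_of_le h (min_le_left _ _)))
        · exact hB z (le_of_lt (lt_of_le_of_lt (le_max_left _ _) h))
      exact le_trans hlt.le (hzsmax hz₀mem)
  have hlocal : IsLocalMax f zs := Filter.Eventually.of_forall hglobal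
  have hderiv : deriv f zs = 0 := hlocal.deriv_eq_zero
  have hfderiv : deriv f zs = 2 * U zs * U1 zs := by
    have := ((hUz zs).pow 2).deriv
    rw [show f = U ^ 2 from rfl, this]; push_cast; ring
  have hfpos : 0 < f zs := lt_of_lt_of_le hfz₀ (hzsmax hz₀mem)
  have hUzs : U zs ≠ 0 := by
    intro h; rw [hfdef] at hfpos; simp [h] at hfpos
  have hU1zs : U1 zs = 0 := by
    rw [hderiv] at hfderiv
    rcases mul_eq_zero.mp hfderiv.symm with h | h
    · rcases mul_eq_zero.mp h with h' | h'
      · norm_num at h'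
      · exact absurd h' hUzs
    · exact h
  have := hV zs
  rw [hU1zs] at this
  simp only [ne_eq] at hUzs
  have : U zs = 0 := by nlinarith [this]
  exact hUzs this
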